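/- At every point x with x·x ≠ 0, the 4×4 matrix g_{μν}(x) = −(l²/(x·x)²)(η_{μρ}η_{ντ} − η_{μν}η_{ρτ})x^ρx^τ has rank exactly 3, and the matrix h^{μν}(x) = l⁻⁴(x·x)x^μx^ν has rank exactly 1. -/
import Mathlib


open scoped BigOperators

/-- Sign of the Minkowski metric η = diag(1,-1,-1,-1). -/
def etaS (μ : Fin 4) : ℝ := if μ = 0 then 1 else -1

/-- Minkowski metric components η_{μν}. -/
def etaM (μ ν : Fin 4) : ℝ := if μ = ν then etaS μ else 0

/-- Minkowski inner product x·y = η_{μν}x^μy^ν. -/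
def mdot (x y : Fin 4 → ℝ) : ℝ := ∑ μ, etaS μ * x μ * y μ

/-- Lowered components x_μ = η_{μν}x^ν. -/
def lowerIdx (x : Fin 4 → ℝ) (μ : Fin 4) : ℝ := etaS μ * x μ

/-- Connection coefficients Γ^μ_{νλ}(x) = −(x_ν δ^μ_λ + δ^μ_ν x_λ)/(x·x). -/
noncomputable def Gam (x : Fin 4 → ℝ) (μ ν lam : Fin 4) : ℝ :=
  -((lowerIdx x ν) * (if μ = lam then (1:ℝ) else 0)
    + (if μ = ν then (1:ℝ) else 0) * lowerIdx x lam) / mdot x x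

/-- The degenerate metric, sign `s`: g_{μν} = s·(l²/(x·x)²)(η_{μρ}η_{ντ} − η_{μν}η_{ρτ})x^ρx^τ. -/
noncomputable def gten (l s : ℝ) (x : Fin 4 → ℝ) (μ ν : Fin 4) : ℝ :=
  s * (l ^ 2 / (mdot x x) ^ 2) *
    ∑ ρ, ∑ τ, (etaM μ ρ * etaM ν τ - etaM μ ν * etaM ρ τ) * x ρ * x τ

/-- The degenerate (2,0)-tensor h^{μν} = l⁻⁴(x·x)x^μx^ν. -/
noncomputable def hten (l : ℝ) (x : Fin 4 → ℝ) (μ ν : Fin 4) : ℝ :=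
  (1 / l ^ 4) * mdot x x * x μ * x ν

/-- Partial derivative ∂_μ f at x. -/
noncomputable def pd (f : (Fin 4 → ℝ) → ℝ) (μ : Fin 4) (x : Fin 4 → ℝ) : ℝ :=
  fderiv ℝ f x (Pi.single μ 1)

lemma etaS_sq (μ : Fin 4) : etaS μ * etaS μ = 1 := by
  unfold etaS; split <;> norm_num

lemma sum_etaM (μ : Fin 4) (g : Fin 4 → ℝ) :
    ∑ ρ, etaM μ ρ * g ρ = etaS μ * g μ := by
  rw [Finset.sum_eq_single μ]
  · simp [etaM]
  · intro b _ hb; simp [etaM, Ne.symm hb]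
  · simp

lemma gten_eq (l : ℝ) (x : Fin 4 → ℝ) (μ ν : Fin 4) :
    gten l (-1) x μ ν =
      (l ^ 2 / (mdot x x) ^ 2) *
        (etaM μ ν * mdot x x - lowerIdx x μ * lowerIdx x ν) := by
  have key : ∑ ρ, ∑ τ, (etaM μ ρ * etaM ν τ - etaM μ ν * etaM ρ τ) * x ρ * x τ
      = lowerIdx x μ * lowerIdx x ν - etaM μ ν * mdot x x := by
    have inner : ∀ ρ, ∑ τ, (etaM μ ρ * etaM ν τ - etaM μ ν * etaM ρ τ) * x ρ * x τ
        = etaM μ ρ * (x ρ * (etaS ν * x ν)) - etaM μ ν * (etaS ρ * x ρ * x ρ) := by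
      intro ρ
      have e1 : ∀ τ, (etaM μ ρ * etaM ν τ - etaM μ ν * etaM ρ τ) * x ρ * x τ
          = etaM μ ρ * (x ρ * (etaM ν τ * x τ)) - etaM μ ν * (etaM ρ τ * x τ * x ρ) := by
        intro τ; ring
      simp only [e1, Finset.sum_sub_distrib, ← Finset.mul_sum, ← Finset.sum_mul,
        sum_etaM]
    simp only [inner, Finset.sum_sub_distrib, ← Finset.sum_mul, ← Finset.mul_sum]
    have e2 : ∑ ρ, etaM μ ρ * (x ρ * (etaS ν * x ν)) = etaS μ * (x μ * (etaS ν * x ν)) :=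
      sum_etaM μ _
    rw [e2]
    unfold lowerIdx mdot
    congr 1
    ring
  unfold gten
  rw [key]
  ring

lemma mdot_self_pos_euclid {x : Fin 4 → ℝ} (hx : x ≠ 0) :
    0 < ∑ ν, x ν * x ν := by
  rcases Function.ne_iff.mp hx with ⟨ν, hν⟩
  exact Finset.sum_pos' (fun i _ => mul_self_nonneg _)
    ⟨ν, Finset.mem_univ ν, mul_self_pos.mpr hν⟩

/-- At every point with x·x ≠ 0, the matrix g⁻_{μν} has rank exactly 3, and the
matrix h^{μν} has rank exactly 1. -/
theorem gten_hten_rank (l : ℝ) (hl : 0 < l) :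
    ∀ x : Fin 4 → ℝ, mdot x x ≠ 0 →
      (Matrix.of (fun μ ν => gten l (-1) x μ ν)).rank = 3 ∧
      (Matrix.of (fun μ ν => hten l x μ ν)).rank = 1 := by
  intro x hx
  have hxne : x ≠ 0 := by
    rintro rfl
    exact hx (by simp [mdot])
  have hl2 : (l:ℝ) ^ 2 ≠ 0 := pow_ne_zero _ hl.ne'
  have hd2 : (mdot x x) ^ 2 ≠ 0 := pow_ne_zero _ hx
  have hcne : (l ^ 2 / (mdot x x) ^ 2) ≠ 0 := div_ne_zero hl2 hd2
  set c : ℝ := l ^ 2 / (mdot x x) ^ 2 with hc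
  set d : ℝ := mdot x x with hd
  set G : Matrix (Fin 4) (Fin 4) ℝ := Matrix.of (fun μ ν => gten l (-1) x μ ν) with hG
  set H : Matrix (Fin 4) (Fin 4) ℝ := Matrix.of (fun μ ν => hten l x μ ν) with hH
  -- mulVec formula for G
  have hGmv : ∀ v : Fin 4 → ℝ, ∀ μ,
      G.mulVec v μ = c * (etaS μ * d * v μ - lowerIdx x μ * mdot x v) := by
    intro v μ
    have e1 : ∀ ν, G μ ν * v ν =
        c * (etaM μ ν * v ν) * d - c * lowerIdx x μ * (etaS ν * x ν * v ν) := by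
      intro ν
      show (Matrix.of (fun μ ν => gten l (-1) x μ ν)) μ ν * v ν = _
      simp only [Matrix.of_apply, gten_eq, lowerIdx, ← hc, ← hd]
      ring
    simp only [Matrix.mulVec, dotProduct, e1, Finset.sum_sub_distrib,
      ← Finset.mul_sum, ← Finset.sum_mul]
    have e2 : ∑ ν, etaM μ ν * v ν = etaS μ * v μ := sum_etaM μ v
    simp only [e2, mdot]
    ring
  -- kernel of G is span {x}
  have hker : LinearMap.ker G.mulVecLin = Submodule.span ℝ {x} := by
    apply le_antisymm
    · intro v hv
      have hv0 : ∀ μ, etaS μ * d * v μ - lowerIdx x μ * mdot x v = 0 := by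
        intro μ
        have h0 : G.mulVec v μ = 0 := by
          have := congrFun (LinearMap.mem_ker.mp hv) μ
          rw [Matrix.mulVecLin_apply] at this
          simpa using this
        rw [hGmv v μ] at h0
        rcases mul_eq_zero.mp h0 with h | h
        · exact absurd h hcne
        · exact h
      have hveq : v = (mdot x v / d) • x := by
        funext μ
        have h2 : etaS μ * d * v μ = etaS μ * x μ * mdot x v := by
          have := sub_eq_zero.mp (hv0 μ)
          simpa [lowerIdx] using this
        have h3 : d * v μ = x μ * mdot x v := by
          have := congrArg (fun t => etaS μ * t) h2
          simp only [← mul_assoc] at this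
          rw [etaS_sq μ] at this
          simpa using this
        have h4 : v μ = x μ * mdot x v / d := by
          field_simp
          linarith [h3]
        simp only [Pi.smul_apply, smul_eq_mul, h4]
        ring
      rw [hveq]
      exact Submodule.smul_mem _ _ (Submodule.mem_span_singleton_self x)
    · rw [Submodule.span_le, Set.singleton_subset_iff]
      apply LinearMap.mem_ker.mpr
      funext μ
      rw [Matrix.mulVecLin_apply, hGmv x μ]
      have : etaS μ * d * x μ - lowerIdx x μ * mdot x x = 0 := by
        simp only [lowerIdx, ← hd]
        ring
      rw [this, mul_zero]
      simp
  -- range of H is span {x}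
  have hHmv : ∀ v : Fin 4 → ℝ,
      H.mulVec v = ((1 / l ^ 4) * d * ∑ ν, x ν * v ν) • x := by
    intro v
    funext μ
    show ∑ ν, (Matrix.of (fun μ ν => hten l x μ ν)) μ ν * v ν = _
    simp only [Matrix.of_apply, hten, Pi.smul_apply, smul_eq_mul, ← hd,
      Finset.mul_sum]
    rw [Finset.sum_mul]
    exact Finset.sum_congr rfl (fun ν _ => by ring)
  have hrange : LinearMap.range H.mulVecLin = Submodule.span ℝ {x} := by
    apply le_antisymm
    · rintro _ ⟨v, rfl⟩
      rw [Matrix.mulVecLin_apply, hHmv]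
      exact Submodule.smul_mem _ _ (Submodule.mem_span_singleton_self x)
    · rw [Submodule.span_le, Set.singleton_subset_iff]
      set k : ℝ := (1 / l ^ 4) * d * ∑ ν, x ν * x ν with hk
      have hl4 : (1:ℝ) / l ^ 4 ≠ 0 := by positivity
      have hkne : k ≠ 0 :=
        mul_ne_zero (mul_ne_zero hl4 hx) (mdot_self_pos_euclid hxne).ne'
      refine ⟨k⁻¹ • x, ?_⟩
      rw [map_smul, Matrix.mulVecLin_apply, hHmv, smul_smul,
        inv_mul_cancel₀ hkne, one_smul]
  have hspanrank : Module.finrank ℝ (Submodule.span ℝ ({x} : Set (Fin 4 → ℝ))) = 1 :=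
    finrank_span_singleton hxne
  constructor
  · have h4 := LinearMap.finrank_range_add_finrank_ker G.mulVecLin
    rw [hker, hspanrank, Module.finrank_pi] at h4
    simp only [Fintype.card_fin] at h4
    show Module.finrank ℝ (LinearMap.range G.mulVecLin) = 3
    omega
  · show Module.finrank ℝ (LinearMap.range H.mulVecLin) = 1
    rw [hrange, hspanrank]
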